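/- Let p be an odd prime and l an integer with p ∤ l. Let n ≥ 1 and let (a_1,b_1),…,(a_n,b_n) be pairs of coprime integers such that for some 1 ≤ n'_0 < n_0 ≤ n: a_j = p·a'_j with p ∤ a'_j for 1 ≤ j ≤ n'_0; a_j = p·a'_j with p ∣ a'_j for n'_0 < j ≤ n_0; and p ∤ a_j for j > n_0. Then Σ_{h ∈ ℤ/pℤ} Σ_{s=0}^{p−1} Π_{j=1}^{n} η_{h,s}(a_j,b_j) = p^{n_0−n'_0} · Π_{j=1}^{n'_0} S_p(l·a'_j·b_j); consequently the Dijkgraaf–Witten invariant satisfies Z^{ω_l}(M_O(g;(a_1,b_1),…,(a_n,b_n))) = p^{2g−2}·p^{n_0−n'_0}·Π_{j=1}^{n'_0} S_p(l·a'_j·b_j). -/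

import Mathlib

/-- `ζ_n = exp(2πi/n)`. -/
noncomputable def zetaC (n : ℕ) : ℂ := Complex.exp (2 * Real.pi * Complex.I / n)

/-- The Gauss-type sum `S_p(A) = Σ_{k=0}^{p−1} ζ_p^{A·k²}`. -/
noncomputable def SP (p : ℕ) (A : ℤ) : ℂ := ∑ k ∈ Finset.range p, zetaC p ^ (A * (k : ℤ) ^ 2)

/-- `η_{h,s}(a,b) = Σ_{z ∈ ℤ/pℤ, a·z = h} ζ_{p²}^{l·a·b·z̃² − (2·l·h̃ + p·s)·b·z̃}`. -/
noncomputable def etaP (p : ℕ) [NeZero p] (l : ℤ) (h : ZMod p) (s a b : ℤ) : ℂ :=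
  ∑ z : ZMod p,
    if a • z = h then
      zetaC (p ^ 2) ^
        (l * a * b * (z.val : ℤ) ^ 2 - (2 * l * (h.val : ℤ) + p * s) * b * (z.val : ℤ))
    else 0

lemma zetaC_ne_zero (n : ℕ) : zetaC n ≠ 0 := Complex.exp_ne_zero _

lemma zetaC_prim (p : ℕ) (hp : p ≠ 0) : IsPrimitiveRoot (zetaC p) p :=
  Complex.isPrimitiveRoot_exp p hp

lemma zetaC_p_mul (p : ℕ) (hp : p ≠ 0) (X : ℤ) : zetaC p ^ ((p : ℤ) * X) = 1 := by
  rw [zpow_mul, zpow_natCast, (zetaC_prim p hp).pow_eq_one, one_zpow]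

lemma zetaC_sq_pow (p : ℕ) (hp : p ≠ 0) (X : ℤ) :
    zetaC (p ^ 2) ^ ((p : ℤ) * X) = zetaC p ^ X := by
  have h1 : zetaC (p ^ 2) ^ (p : ℤ) = zetaC p := by
    rw [zpow_natCast]
    unfold zetaC
    rw [← Complex.exp_nat_mul]
    congr 1
    have hpc : (p : ℂ) ≠ 0 := Nat.cast_ne_zero.mpr hp
    push_cast
    field_simp
  rw [zpow_mul, h1]

lemma geom_zero (p : ℕ) (hp : p ≠ 0) (c : ℤ) (hc : ¬ (p : ℤ) ∣ c) :
    ∑ k ∈ Finset.range p, zetaC p ^ (c * (k : ℤ)) = 0 := by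
  have prim := zetaC_prim p hp
  have hsum : ∑ k ∈ Finset.range p, zetaC p ^ (c * (k : ℤ))
      = ∑ k ∈ Finset.range p, (zetaC p ^ c) ^ k := by
    refine Finset.sum_congr rfl fun k _ => ?_
    rw [← zpow_natCast (zetaC p ^ c) k, ← zpow_mul]
  have hx1 : zetaC p ^ c ≠ 1 := fun h => hc ((prim.zpow_eq_one_iff_dvd c).mp h)
  have hxp : (zetaC p ^ c) ^ p = 1 := by
    rw [← zpow_natCast, ← zpow_mul, mul_comm, zetaC_p_mul p hp]
  rw [hsum, geom_sum_eq hx1, hxp, sub_self, zero_div]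

lemma sum_val_eq (p : ℕ) [NeZero p] (f : ℕ → ℂ) :
    ∑ z : ZMod p, f z.val = ∑ k ∈ Finset.range p, f k := by
  refine Finset.sum_nbij' (fun z => z.val) (fun k => (k : ZMod p)) ?_ ?_ ?_ ?_ ?_
  · intro z _; exact Finset.mem_range.mpr (ZMod.val_lt z)
  · intro k _; exact Finset.mem_univ _
  · intro z _; exact ZMod.natCast_zmod_val z
  · intro k hk; exact ZMod.val_natCast_of_lt (Finset.mem_range.mp hk)
  · intro z _; rfl

lemma eta_h_ne (p : ℕ) [NeZero p] (l s a b : ℤ) (h : ZMod p) (hh : h ≠ 0)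
    (ha : (p : ℤ) ∣ a) : etaP p l h s a b = 0 := by
  unfold etaP
  refine Finset.sum_eq_zero fun z _ => ?_
  have h0 : (a • z : ZMod p) = 0 := by
    rw [zsmul_eq_mul, show ((a : ZMod p)) = 0 from (ZMod.intCast_zmod_eq_zero_iff_dvd a p).mpr ha,
      zero_mul]
  rw [if_neg fun e => hh (e.symm.trans h0)]

lemma eta_pdvd (p : ℕ) [NeZero p] (hp : p ≠ 0) (l a' b s : ℤ) :
    etaP p l 0 s ((p : ℤ) * a') b =
      ∑ k ∈ Finset.range p, zetaC p ^ (l * a' * b * (k : ℤ) ^ 2 - s * b * (k : ℤ)) := by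
  unfold etaP
  rw [← sum_val_eq p (fun k => zetaC p ^ (l * a' * b * (k : ℤ) ^ 2 - s * b * (k : ℤ)))]
  refine Finset.sum_congr rfl fun z _ => ?_
  have hc : (((p : ℤ) * a') • z : ZMod p) = 0 := by
    rw [zsmul_eq_mul]
    push_cast
    simp
  rw [if_pos hc,
    show l * ((p : ℤ) * a') * b * ((z.val : ℤ)) ^ 2
        - (2 * l * (((0 : ZMod p)).val : ℤ) + (p : ℤ) * s) * b * (z.val : ℤ)
      = (p : ℤ) * (l * a' * b * (z.val : ℤ) ^ 2 - s * b * (z.val : ℤ)) from by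
        rw [ZMod.val_zero]; push_cast; ring]
  exact zetaC_sq_pow p hp _

lemma eta_big (p : ℕ) [NeZero p] (hp : p.Prime) (l s a b : ℤ) (ha : ¬ (p : ℤ) ∣ a) :
    etaP p l 0 s a b = 1 := by
  haveI := Fact.mk hp
  unfold etaP
  rw [Fintype.sum_eq_single (0 : ZMod p)]
  · rw [if_pos (smul_zero a)]
    simp
  · intro z hz
    rw [if_neg]
    intro hcon
    rw [zsmul_eq_mul] at hcon
    have haz : (a : ZMod p) ≠ 0 := fun h => ha ((ZMod.intCast_zmod_eq_zero_iff_dvd a p).mp h)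
    rcases mul_eq_zero.mp hcon with h | h
    · exact haz h
    · exact hz h

/- The pairs `(a_j, b_j)`, `1 ≤ j ≤ n`, of the paper are indexed here by `j ∈ range n`
(`0`-based, so paper's `j` is `j+1` here); `1 ≤ n'_0 < n_0 ≤ n`.
By the paper's Theorem 3.3, `p^(2g−2) · Σ_{h,s} Π_j η_{h,s}(a_j,b_j)` is the
Dijkgraaf–Witten invariant `Z^{ω_l}(M_O(g;(a_1,b_1),…,(a_n,b_n)))`, whence the second
conjunct states the "consequently" clause. -/
theorem statement18 (p : ℕ) [NeZero p] (hp : p.Prime) (hp2 : p ≠ 2) (l : ℤ)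
    (hl : ¬ (p : ℤ) ∣ l) (n n0' n0 : ℕ) (hn : 1 ≤ n)
    (h1 : 1 ≤ n0') (h2 : n0' < n0) (h3 : n0 ≤ n)
    (a a' b : ℕ → ℤ) (hcop : ∀ j < n, IsCoprime (a j) (b j))
    (hsmall : ∀ j < n0', a j = (p : ℤ) * a' j ∧ ¬ (p : ℤ) ∣ a' j)
    (hmid : ∀ j, n0' ≤ j → j < n0 → a j = (p : ℤ) * a' j ∧ (p : ℤ) ∣ a' j)
    (hbig : ∀ j, n0 ≤ j → j < n → ¬ (p : ℤ) ∣ a j) (g : ℕ) :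
    (∑ h : ZMod p, ∑ s ∈ Finset.range p, ∏ j ∈ Finset.range n, etaP p l h (s : ℤ) (a j) (b j)) =
      (p : ℂ) ^ (n0 - n0') * (∏ j ∈ Finset.range n0', SP p (l * a' j * b j)) ∧
    (p : ℂ) ^ (2 * (g : ℤ) - 2) *
        (∑ h : ZMod p, ∑ s ∈ Finset.range p,
          ∏ j ∈ Finset.range n, etaP p l h (s : ℤ) (a j) (b j)) =
      (p : ℂ) ^ (2 * (g : ℤ) - 2) * (p : ℂ) ^ (n0 - n0') *
        (∏ j ∈ Finset.range n0', SP p (l * a' j * b j)) := by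
  haveI := Fact.mk hp
  have hp0 : p ≠ 0 := hp.ne_zero
  have hpint : Prime (p : ℤ) := Nat.prime_iff_prime_int.mp hp
  have hb_ndvd : ∀ j < n0, ¬ (p : ℤ) ∣ b j := by
    intro j hj hdvd
    have hpa : (p : ℤ) ∣ a j := by
      rcases lt_or_ge j n0' with h | h
      · exact ⟨a' j, (hsmall j h).1⟩
      · exact ⟨a' j, (hmid j h hj).1⟩
    obtain ⟨u, v, huv⟩ := hcop j (lt_of_lt_of_le hj h3)
    have hone : (p : ℤ) ∣ 1 := by
      rw [← huv]; exact dvd_add (hpa.mul_left u) (hdvd.mul_left v)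
    have hle := Int.le_of_dvd one_pos hone
    have h2le : (2 : ℤ) ≤ (p : ℤ) := by exact_mod_cast hp.two_le
    omega
  have key : (∑ h : ZMod p, ∑ s ∈ Finset.range p,
        ∏ j ∈ Finset.range n, etaP p l h (s : ℤ) (a j) (b j)) =
      (p : ℂ) ^ (n0 - n0') * (∏ j ∈ Finset.range n0', SP p (l * a' j * b j)) := by
    rw [Fintype.sum_eq_single (0 : ZMod p) ?hne]
    case hne =>
      intro h hh
      refine Finset.sum_eq_zero fun s _ => ?_
      refine Finset.prod_eq_zero (Finset.mem_range.mpr hn) ?_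
      exact eta_h_ne p l _ _ _ h hh ⟨a' 0, (hsmall 0 h1).1⟩
    rw [Finset.sum_eq_single_of_mem 0 (Finset.mem_range.mpr hp.pos) ?hs]
    case hs =>
      intro s hs hs0
      refine Finset.prod_eq_zero (Finset.mem_range.mpr (lt_of_lt_of_le h2 h3)) ?_
      obtain ⟨ha, a'', ha''⟩ := hmid n0' le_rfl h2
      rw [ha, eta_pdvd p hp0]
      have hnb : ¬ (p : ℤ) ∣ (-((s : ℤ) * b n0')) := by
        rw [Int.dvd_neg]
        intro hd
        rcases hpint.dvd_mul.mp hd with h | h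
        · have hps : p ∣ s := Int.natCast_dvd_natCast.mp h
          have := Nat.le_of_dvd (Nat.pos_of_ne_zero hs0) hps
          have := Finset.mem_range.mp hs
          omega
        · exact hb_ndvd n0' h2 h
      have hre : ∀ k ∈ Finset.range p,
          zetaC p ^ (l * a' n0' * b n0' * (k : ℤ) ^ 2 - (s : ℤ) * b n0' * (k : ℤ))
            = zetaC p ^ ((-((s : ℤ) * b n0')) * (k : ℤ)) := by
        intro k _
        rw [show l * a' n0' * b n0' * (k : ℤ) ^ 2 - (s : ℤ) * b n0' * (k : ℤ)
            = (p : ℤ) * (l * a'' * b n0' * (k : ℤ) ^ 2) + (-((s : ℤ) * b n0')) * (k : ℤ) from by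
              rw [ha'']; ring,
          zpow_add₀ (zetaC_ne_zero p), zetaC_p_mul p hp0, one_mul]
      rw [Finset.sum_congr rfl hre]
      exact geom_zero p hp0 _ hnb
    rw [← Finset.prod_range_mul_prod_Ico _ h3, ← Finset.prod_range_mul_prod_Ico _ h2.le]
    have hbigprod : (∏ j ∈ Finset.Ico n0 n, etaP p l 0 ((0 : ℕ) : ℤ) (a j) (b j)) = 1 := by
      refine Finset.prod_eq_one fun j hj => ?_
      obtain ⟨hj1, hj2⟩ := Finset.mem_Ico.mp hj
      exact eta_big p hp _ _ _ _ (hbig j hj1 hj2)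
    have hmidprod : (∏ j ∈ Finset.Ico n0' n0, etaP p l 0 ((0 : ℕ) : ℤ) (a j) (b j))
        = (p : ℂ) ^ (n0 - n0') := by
      rw [Finset.prod_congr rfl (g := fun _ => (p : ℂ)) fun j hj => ?_, Finset.prod_const,
        Nat.card_Ico]
      obtain ⟨hj1, hj2⟩ := Finset.mem_Ico.mp hj
      obtain ⟨ha, a'', ha''⟩ := hmid j hj1 hj2
      rw [ha, eta_pdvd p hp0]
      have hre : ∀ k ∈ Finset.range p,
          zetaC p ^ (l * a' j * b j * (k : ℤ) ^ 2 - ((0 : ℕ) : ℤ) * b j * (k : ℤ))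
            = (1 : ℂ) := by
        intro k _
        rw [show l * a' j * b j * (k : ℤ) ^ 2 - ((0 : ℕ) : ℤ) * b j * (k : ℤ)
            = (p : ℤ) * (l * a'' * b j * (k : ℤ) ^ 2) from by rw [ha'']; push_cast; ring,
          zetaC_p_mul p hp0]
      rw [Finset.sum_congr rfl hre, Finset.sum_const, Finset.card_range, nsmul_eq_mul, mul_one]
    have hsmallprod : (∏ j ∈ Finset.range n0', etaP p l 0 ((0 : ℕ) : ℤ) (a j) (b j))
        = ∏ j ∈ Finset.range n0', SP p (l * a' j * b j) := by
      refine Finset.prod_congr rfl fun j hj => ?_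
      obtain ⟨ha, hnd⟩ := hsmall j (Finset.mem_range.mp hj)
      rw [ha, eta_pdvd p hp0]
      unfold SP
      refine Finset.sum_congr rfl fun k _ => ?_
      congr 1
      push_cast
      ring
    rw [hbigprod, hmidprod, hsmallprod, mul_one, mul_comm]
  exact ⟨key, by rw [key]; ring⟩
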